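/- Let F be a field of prime characteristic p, let 0 < n < p, and let A ∈ M_n(F) be a nil-clean matrix whose trace equals n·1, where n·1 denotes the image of the integer n in F. Then A is unipotent. -/

import Mathlib

/-- An element of a ring is *nil-clean* if it is the sum of an idempotent
and a nilpotent element. -/
def IsNilClean {R : Type*} [Ring R] (a : R) : Prop :=
  ∃ e n : R, e ^ 2 = e ∧ IsNilpotent n ∧ a = e + n

/-- Over a field of prime characteristic `p`, with `0 < n < p`, a nil-clean
`n × n` matrix of trace `n·1` is unipotent. -/
theorem stmt_10 {F : Type*} [Field F] {p : ℕ} (hp : p.Prime) [CharP F p] {n : ℕ}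
    (h0 : 0 < n) (hnp : n < p) (A : Matrix (Fin n) (Fin n) F)
    (hA : IsNilClean A) (htr : A.trace = (n : F)) :
    IsNilpotent (A - 1) := by
  obtain ⟨E, N, hE, hN, rfl⟩ := hA
  have htrN : N.trace = 0 := (Matrix.isNilpotent_trace_of_isNilpotent hN).eq_zero
  have htrE : E.trace = (n : F) := by
    rw [Matrix.trace_add, htrN, add_zero] at htr; exact htr
  set f := Matrix.toLin' E with hf
  have hidem : f ∘ₗ f = f := by
    rw [hf, ← Matrix.toLin'_mul]; congr 1; simpa [pow_two] using hE
  obtain ⟨P, hP⟩ := (LinearMap.isProj_iff_isIdempotentElem f).mpr hidem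
  have htrf : LinearMap.trace F _ f = (Module.finrank F P : F) := hP.trace
  have htrf' : LinearMap.trace F _ f = E.trace := by
    rw [hf, LinearMap.trace_eq_matrix_trace F (Pi.basisFun F (Fin n))]
    congr 1
    rw [LinearMap.toMatrix_eq_toMatrix', LinearMap.toMatrix'_toLin']
  have hrank : Module.finrank F P = n := by
    have hle : Module.finrank F P ≤ n := by
      simpa using Submodule.finrank_le P
    have : ((Module.finrank F P : ℕ) : F) = (n : F) := by
      rw [← htrf, htrf', htrE]
    exact CharP.natCast_injOn_Iio F p (lt_of_le_of_lt hle hnp) hnp this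
  have hPtop : P = ⊤ := by
    apply Submodule.eq_top_of_finrank_eq
    simp [hrank]
  have hE1 : E = 1 := by
    have hfid : f = LinearMap.id := by
      refine LinearMap.ext fun x => ?_
      exact hP.map_id x (hPtop ▸ Submodule.mem_top)
    have := congrArg Matrix.toLin'.symm hfid
    simpa [hf] using this
  simpa [hE1] using hN
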